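/- Let α ∈ ℝ with α > 0, β ∈ ℂ, μ ∈ ℂ with |μ| = 1, and let V be an 𝔰𝔳-module that is unitary for the conjugate-linear anti-involution θ⁺_{α,β,μ} and is a highest weight module with highest weight vector v (so v generates V, is a simultaneous eigenvector for L₀, M₀, c, and L_n·v = M_n·v = 0 for n ≥ 1, Y_{n+1/2}·v = 0 for n ≥ 0). Then M_n·w = 0 and Y_{n+1/2}·w = 0 for all n ∈ ℤ and all w ∈ V. -/

import Mathlib

/-- Index type for the distinguished basis of the Schrödinger–Virasoro algebra.
`Y n` stands for the basis element `Y_{n+1/2}`. -/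
inductive SVIndex : Type
  | L : ℤ → SVIndex
  | M : ℤ → SVIndex
  | Y : ℤ → SVIndex
  | c : SVIndex

/-- A realization of the Schrödinger–Virasoro Lie algebra: a complex Lie algebra `sv`
with distinguished elements `L n`, `M n`, `Y n` (representing `Y_{n+1/2}`) and `c`
which form a basis and satisfy the defining bracket relations. -/
structure SVAlgebra (sv : Type*) [LieRing sv] [LieAlgebra ℂ sv] where
  L : ℤ → sv
  M : ℤ → sv
  Y : ℤ → sv
  c : sv
  indep : LinearIndependent ℂ (fun i : SVIndex =>
    match i with
    | .L n => L n
    | .M n => M n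
    | .Y n => Y n
    | .c => c)
  span_top : Submodule.span ℂ (Set.range (fun i : SVIndex =>
    match i with
    | .L n => L n
    | .M n => M n
    | .Y n => Y n
    | .c => c)) = ⊤
  bracket_LL : ∀ m n : ℤ, ⁅L m, L n⁆ =
    ((n : ℂ) - (m : ℂ)) • L (m + n)
      + (if m + n = 0 then ((m : ℂ) ^ 3 - (m : ℂ)) / 12 else 0) • c
  bracket_LM : ∀ m n : ℤ, ⁅L m, M n⁆ = (n : ℂ) • M (m + n)
  bracket_LY : ∀ m n : ℤ, ⁅L m, Y n⁆ = ((n : ℂ) + (1 - (m : ℂ)) / 2) • Y (m + n)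
  bracket_YY : ∀ m n : ℤ, ⁅Y m, Y n⁆ = ((n : ℂ) - (m : ℂ)) • M (m + n + 1)
  bracket_MM : ∀ m n : ℤ, ⁅M m, M n⁆ = 0
  bracket_MY : ∀ m n : ℤ, ⁅M m, Y n⁆ = 0
  bracket_c : ∀ x : sv, ⁅x, c⁆ = 0

/-- A conjugate-linear anti-involution of a complex Lie algebra. -/
structure ConjAntiInvolution (sv : Type*) [LieRing sv] [LieAlgebra ℂ sv] where
  toFun : sv → sv
  map_add' : ∀ x y : sv, toFun (x + y) = toFun x + toFun y
  map_smul' : ∀ (a : ℂ) (x : sv), toFun (a • x) = (starRingEnd ℂ a) • toFun x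
  map_bracket' : ∀ x y : sv, toFun ⁅x, y⁆ = ⁅toFun y, toFun x⁆
  invol' : ∀ x : sv, toFun (toFun x) = x

variable {sv : Type*} [LieRing sv] [LieAlgebra ℂ sv]

/-- The simultaneous eigenspace of `L 0`, `M 0`, `c` with eigenvalue triple `χ`. -/
def svWeightSpace (A : SVAlgebra sv) (V : Type*) [AddCommGroup V] [Module ℂ V]
    [LieRingModule sv V] [LieModule ℂ sv V] (χ : ℂ × ℂ × ℂ) : Submodule ℂ V :=
  Module.End.eigenspace (LieModule.toEnd ℂ sv V (A.L 0)) χ.1 ⊓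
    Module.End.eigenspace (LieModule.toEnd ℂ sv V (A.M 0)) χ.2.1 ⊓
    Module.End.eigenspace (LieModule.toEnd ℂ sv V A.c) χ.2.2

/-- `V` is a weight module: it is the (direct) sum of the simultaneous eigenspaces
of `L 0`, `M 0`, `c`, each of which is finite-dimensional. -/
def IsWeightModule (A : SVAlgebra sv) (V : Type*) [AddCommGroup V] [Module ℂ V]
    [LieRingModule sv V] [LieModule ℂ sv V] : Prop :=
  (∀ χ : ℂ × ℂ × ℂ, FiniteDimensional ℂ (svWeightSpace A V χ)) ∧
    (⨆ χ : ℂ × ℂ × ℂ, svWeightSpace A V χ) = ⊤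

/-- `B` is a positive-definite Hermitian sesquilinear form on `V` that is
contravariant with respect to the map `θ`. -/
def IsUnitaryForm (θ : sv → sv) (V : Type*) [AddCommGroup V] [Module ℂ V]
    [LieRingModule sv V] (B : V → V → ℂ) : Prop :=
  (∀ u v w : V, B (u + v) w = B u w + B v w) ∧
  (∀ (a : ℂ) (u v : V), B (a • u) v = a * B u v) ∧
  (∀ u v : V, B u v = starRingEnd ℂ (B v u)) ∧
  (∀ v : V, v ≠ 0 → 0 < (B v v).re) ∧
  (∀ (x : sv) (u v : V), B ⁅x, u⁆ v = B u ⁅θ x, v⁆)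

/-- `V` is unitary for the conjugate-linear anti-involution `θ`. -/
def IsUnitaryFor (θ : sv → sv) (V : Type*) [AddCommGroup V] [Module ℂ V]
    [LieRingModule sv V] : Prop :=
  ∃ B : V → V → ℂ, IsUnitaryForm θ V B

/-- The defining formulas of the anti-involution `θ⁺_{α,β,μ}` (with a chosen
square root `s` of `μ`): recall `A.Y n` stands for `Y_{n+1/2}`, so
`θ(Y_{n+1/2}) = s·α^{n+1/2}·Y_{-n-1/2}`. -/
def IsThetaPlus (A : SVAlgebra sv) (θ : sv → sv) (α : ℝ) (β μ s : ℂ) : Prop :=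
  (∀ n : ℤ, θ (A.L n) = ((α : ℂ) ^ n) • A.L (-n) +
      ((((n : ℂ) + 1) / 2) * (α : ℂ) ^ (n - 1) * β +
        (((n : ℂ) - 1) / 2) * (α : ℂ) ^ (n - 1) * μ * starRingEnd ℂ β) • A.M (-n)) ∧
  θ A.c = A.c ∧
  (∀ n : ℤ, θ (A.M n) = (μ * (α : ℂ) ^ n) • A.M (-n)) ∧
  (∀ n : ℤ, θ (A.Y n) = (s * (α : ℂ) ^ n * (Real.sqrt α : ℂ)) • A.Y (-n - 1))

variable {V : Type*} [AddCommGroup V] [Module ℂ V] [LieRingModule sv V] [LieModule ℂ sv V]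

/-- On a highest weight `𝔰𝔳`-module that is unitary for `θ⁺_{α,β,μ}` with `α > 0`,
the elements `M_n` and `Y_{n+1/2}` act as zero. -/
theorem sv_unitary_highest_weight_MY_trivial (A : SVAlgebra sv)
    (α : ℝ) (hα : 0 < α) (β μ s : ℂ) (hμ : ‖μ‖ = 1) (hs : s ^ 2 = μ)
    (θ : ConjAntiInvolution sv) (hθ : IsThetaPlus A θ.toFun α β μ s)
    (hunit : IsUnitaryFor (V := V) θ.toFun)
    (v : V) (hgen : LieSubmodule.lieSpan ℂ sv {v} = ⊤)
    (heig : ∃ a b d : ℂ, ⁅A.L 0, v⁆ = a • v ∧ ⁅A.M 0, v⁆ = b • v ∧ ⁅A.c, v⁆ = d • v)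
    (hann : ∀ n : ℤ, 1 ≤ n → ⁅A.L n, v⁆ = 0 ∧ ⁅A.M n, v⁆ = 0)
    (hannY : ∀ n : ℤ, 0 ≤ n → ⁅A.Y n, v⁆ = 0) :
    ∀ (n : ℤ) (w : V), ⁅A.M n, w⁆ = 0 ∧ ⁅A.Y n, w⁆ = 0 := by
  obtain ⟨B, hadd, hsmul, hherm, hpos, hcontra⟩ := hunit
  obtain ⟨hθL, hθc, hθM, hθY⟩ := hθ
  have hB0 : ∀ u : V, B u (0 : V) = 0 := by
    intro u
    have h1 : B (0 : V) u = 0 := by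
      have h := hsmul 0 u u
      simpa using h
    rw [hherm u 0, h1]
    simp
  have hzero : ∀ w : V, B w w = 0 → w = 0 := by
    intro w hw
    by_contra h
    have := hpos w h
    rw [hw] at this
    simp at this
  have hMneg : ∀ n : ℤ, n ≤ -1 → ⁅A.M n, v⁆ = 0 := by
    intro n hn
    apply hzero
    have hcomm : ⁅A.M (-n), ⁅A.M n, v⁆⁆ = 0 := by
      rw [leibniz_lie, A.bracket_MM, (hann (-n) (by omega)).2]
      simp
    rw [hcontra, hθM, smul_lie, hcomm, smul_zero, hB0]
  have hM0 : ⁅A.M 0, v⁆ = 0 := by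
    have hb : ⁅A.L 1, A.M (-1)⁆ = -A.M 0 := by
      have h := A.bracket_LM 1 (-1)
      norm_num at h
      exact h
    have h3 : -⁅A.M 0, v⁆ = 0 := by
      rw [← neg_lie, ← hb, lie_lie, hMneg (-1) le_rfl, (hann 1 le_rfl).1]
      simp
    exact neg_eq_zero.mp h3
  have hYneg : ∀ n : ℤ, n ≤ -1 → ⁅A.Y n, v⁆ = 0 := by
    intro n hn
    apply hzero
    have hcomm : ⁅A.Y (-n - 1), ⁅A.Y n, v⁆⁆ = 0 := by
      rw [leibniz_lie, A.bracket_YY, hannY (-n - 1) (by omega), lie_zero, add_zero,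
        show -n - 1 + n + 1 = 0 by omega, smul_lie, hM0, smul_zero]
    rw [hcontra, hθY, smul_lie, hcomm, smul_zero, hB0]
  have hM : ∀ n : ℤ, ⁅A.M n, v⁆ = 0 := by
    intro n
    rcases lt_trichotomy n 0 with h | h | h
    · exact hMneg n (by omega)
    · subst h; exact hM0
    · exact (hann n (by omega)).2
  have hY : ∀ n : ℤ, ⁅A.Y n, v⁆ = 0 := by
    intro n
    rcases le_or_gt 0 n with h | h
    · exact hannY n h
    · exact hYneg n (by omega)
  have hspan : ∀ x : sv, x ∈ Submodule.span ℂ (Set.range (fun i : SVIndex =>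
      match i with
      | .L n => A.L n
      | .M n => A.M n
      | .Y n => A.Y n
      | .c => A.c)) := fun x => A.span_top ▸ Submodule.mem_top
  have hMx : ∀ (w : V), (∀ k : ℤ, ⁅A.M k, w⁆ = 0) →
      ∀ (n : ℤ) (x : sv), ⁅⁅A.M n, x⁆, w⁆ = 0 := by
    intro w hw n x
    induction hspan x using Submodule.span_induction with
    | mem y hy =>
      obtain ⟨i, rfl⟩ := hy
      cases i with
      | L m =>
        show ⁅⁅A.M n, A.L m⁆, w⁆ = 0
        rw [← lie_skew, A.bracket_LM, neg_lie, smul_lie, hw, smul_zero, neg_zero]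
      | M m =>
        show ⁅⁅A.M n, A.M m⁆, w⁆ = 0
        rw [A.bracket_MM, zero_lie]
      | Y m =>
        show ⁅⁅A.M n, A.Y m⁆, w⁆ = 0
        rw [A.bracket_MY, zero_lie]
      | c =>
        show ⁅⁅A.M n, A.c⁆, w⁆ = 0
        rw [A.bracket_c, zero_lie]
    | zero => rw [lie_zero, zero_lie]
    | add x y hx hy ihx ihy => rw [lie_add, add_lie, ihx, ihy, add_zero]
    | smul a x hx ih => rw [lie_smul, smul_lie, ih, smul_zero]
  have hYx : ∀ (w : V), (∀ k : ℤ, ⁅A.M k, w⁆ = 0 ∧ ⁅A.Y k, w⁆ = 0) →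
      ∀ (n : ℤ) (x : sv), ⁅⁅A.Y n, x⁆, w⁆ = 0 := by
    intro w hw n x
    induction hspan x using Submodule.span_induction with
    | mem y hy =>
      obtain ⟨i, rfl⟩ := hy
      cases i with
      | L m =>
        show ⁅⁅A.Y n, A.L m⁆, w⁆ = 0
        rw [← lie_skew, A.bracket_LY, neg_lie, smul_lie, (hw _).2, smul_zero, neg_zero]
      | M m =>
        show ⁅⁅A.Y n, A.M m⁆, w⁆ = 0
        rw [← lie_skew, A.bracket_MY, neg_zero, zero_lie]
      | Y m =>
        show ⁅⁅A.Y n, A.Y m⁆, w⁆ = 0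
        rw [A.bracket_YY, smul_lie, (hw _).1, smul_zero]
      | c =>
        show ⁅⁅A.Y n, A.c⁆, w⁆ = 0
        rw [A.bracket_c, zero_lie]
    | zero => rw [lie_zero, zero_lie]
    | add x y hx hy ihx ihy => rw [lie_add, add_lie, ihx, ihy, add_zero]
    | smul a x hx ih => rw [lie_smul, smul_lie, ih, smul_zero]
  let W : LieSubmodule ℂ sv V :=
    { carrier := {w : V | ∀ k : ℤ, ⁅A.M k, w⁆ = 0 ∧ ⁅A.Y k, w⁆ = 0}
      add_mem' := by
        intro a b ha hb k
        constructor
        · rw [lie_add, (ha k).1, (hb k).1, add_zero]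
        · rw [lie_add, (ha k).2, (hb k).2, add_zero]
      zero_mem' := by intro k; simp
      smul_mem' := by
        intro a x hx k
        constructor
        · rw [lie_smul, (hx k).1, smul_zero]
        · rw [lie_smul, (hx k).2, smul_zero]
      lie_mem := by
        intro x w hw k
        constructor
        · rw [leibniz_lie, hMx w (fun k => (hw k).1) k x, (hw k).1, lie_zero, add_zero]
        · rw [leibniz_lie, hYx w hw k x, (hw k).2, lie_zero, add_zero] }
  have hvW : v ∈ W := fun k => ⟨hM k, hY k⟩
  have hWtop : (⊤ : LieSubmodule ℂ sv V) ≤ W := by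
    rw [← hgen]
    exact LieSubmodule.lieSpan_le.mpr (Set.singleton_subset_iff.mpr hvW)
  intro n w
  exact hWtop (LieSubmodule.mem_top w) n
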